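/- Let {(G_i|J_i)} be an isometric amalgamation family with amalgamation H, and let T_i be a traversal for ∥(J_i:G_i) for each i. Then dim_l(H) ≤ min{ Σ_i dim_l(G_i), Σ_i |T_i| + |V(J)| }. -/

import Mathlib

open SimpleGraph

/-- `S` is a local metric set for `G`: every pair of adjacent vertices is
distinguished (by distance) by some vertex of `S`. -/
def IsLocalMetricSet {V : Type*} (G : SimpleGraph V) (S : Set V) : Prop :=
  ∀ u v : V, G.Adj u v → ∃ s ∈ S, G.dist s u ≠ G.dist s v

/-- The local metric dimension of `G`: the minimum cardinality of a local metric set. -/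
noncomputable def localMetricDim {V : Type*} (G : SimpleGraph V) : ℕ :=
  sInf {n | ∃ S : Set V, S.ncard = n ∧ IsLocalMetricSet G S}

/-- `H` is the subgraph-amalgamation of the family `G i` over the common induced
subgraph `J`, via induced embeddings `e i : J → G i` and `f i : G i → H`. -/
structure IsAmalgamation {ι VJ W : Type*} {Vg : ι → Type*}
    (J : SimpleGraph VJ) (G : ∀ i, SimpleGraph (Vg i)) (H : SimpleGraph W)
    (e : ∀ i, VJ → Vg i) (f : ∀ i, Vg i → W) : Prop where
  e_inj : ∀ i, Function.Injective (e i)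
  e_ind : ∀ i a b, (G i).Adj (e i a) (e i b) ↔ J.Adj a b
  f_inj : ∀ i, Function.Injective (f i)
  f_ind : ∀ i x y, H.Adj (f i x) (f i y) ↔ (G i).Adj x y
  compat : ∀ i j a, f i (e i a) = f j (e j a)
  inter : ∀ i j x y, i ≠ j → f i x = f j y → ∃ a, x = e i a ∧ y = e j a
  cover : ∀ w, ∃ i x, f i x = w
  edge_mem : ∀ x y, H.Adj x y → ∃ i a b, x = f i a ∧ y = f i b

/-- An edge `uv` of `G - J` is parallel to `J` in `G` if every vertex of the copy of
`J` (the range of `e`) is equidistant in `G` from `u` and `v`. -/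
def ParallelEdge {VJ Vgi : Type*} (G : SimpleGraph Vgi) (e : VJ → Vgi) (u v : Vgi) : Prop :=
  G.Adj u v ∧ u ∉ Set.range e ∧ v ∉ Set.range e ∧ ∀ a, G.dist (e a) u = G.dist (e a) v

/-- Upper bound for an isometric amalgamation:
`dim_l(H) ≤ min { Σ dim_l(G i), Σ |T i| + |V(J)| }`. -/
lemma ncard_biUnion_le' {ι α : Type*} (t : Finset ι) (s : ι → Set α) :
    (⋃ i ∈ t, s i).ncard ≤ ∑ i ∈ t, (s i).ncard := by
  classical
  induction t using Finset.induction_on with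
  | empty => simp
  | insert a t hx ih =>
    rw [Finset.set_biUnion_insert, Finset.sum_insert hx]
    exact le_trans (Set.ncard_union_le _ _) (by omega)

lemma ncard_iUnion_le' {ι α : Type*} [Fintype ι] (s : ι → Set α) :
    (⋃ i, s i).ncard ≤ ∑ i, (s i).ncard := by
  simpa using ncard_biUnion_le' (Finset.univ) s

lemma localMetricDim_le' {V : Type*} {G : SimpleGraph V} {S : Set V}
    (h : IsLocalMetricSet G S) : localMetricDim G ≤ S.ncard :=
  Nat.sInf_le ⟨S, rfl, h⟩

theorem stmt_12 {ι VJ W : Type*} [Fintype ι] [Fintype VJ] [Fintype W] {Vg : ι → Type*}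
    (J : SimpleGraph VJ) (G : ∀ i, SimpleGraph (Vg i)) (H : SimpleGraph W)
    (e : ∀ i, VJ → Vg i) (f : ∀ i, Vg i → W)
    (amal : IsAmalgamation J G H e f)
    (hGconn : ∀ i, (G i).Connected)
    (hiso : ∀ i (x y : Vg i), (G i).dist x y = H.dist (f i x) (f i y))
    (T : ∀ i, Set (Vg i))
    (hT : ∀ i, (∀ x ∈ T i, x ∉ Set.range (e i)) ∧
      ∀ u v : Vg i, ParallelEdge (G i) (e i) u v →
        ∃ t ∈ T i, H.dist (f i t) (f i u) ≠ H.dist (f i t) (f i v))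
    (hTmin : ∀ i (T' : Set (Vg i)),
      ((∀ x ∈ T', x ∉ Set.range (e i)) ∧
        ∀ u v : Vg i, ParallelEdge (G i) (e i) u v →
          ∃ t ∈ T', H.dist (f i t) (f i u) ≠ H.dist (f i t) (f i v)) →
      (T i).ncard ≤ T'.ncard) :
    localMetricDim H ≤
      min (∑ i, localMetricDim (G i)) ((∑ i, (T i).ncard) + Fintype.card VJ) := by
  classical
  haveI : ∀ i, Finite (Vg i) := fun i => Finite.of_injective (f i) (amal.f_inj i)
  refine le_min ?_ ?_
  · -- first bound: Σ localMetricDim (G i)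
    have hSex : ∀ i, ∃ S : Set (Vg i),
        S.ncard = localMetricDim (G i) ∧ IsLocalMetricSet (G i) S := by
      intro i
      have : localMetricDim (G i) ∈
          {n | ∃ S : Set (Vg i), S.ncard = n ∧ IsLocalMetricSet (G i) S} := by
        apply Nat.sInf_mem
        refine ⟨(Set.univ : Set (Vg i)).ncard, Set.univ, rfl, fun u v huv => ?_⟩
        refine ⟨u, trivial, ?_⟩
        rw [SimpleGraph.dist_self]
        exact ((hGconn i).pos_dist_of_ne huv.ne).ne
      exact this
    choose S hScard hSloc using hSex
    have h1 : IsLocalMetricSet H (⋃ i, f i '' S i) := by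
      intro u v huv
      obtain ⟨i, a, b, ha, hb⟩ := amal.edge_mem u v huv
      subst ha hb
      obtain ⟨s, hs, hne⟩ := hSloc i a b ((amal.f_ind i a b).1 huv)
      exact ⟨f i s, Set.mem_iUnion.2 ⟨i, Set.mem_image_of_mem _ hs⟩,
        by rw [← hiso, ← hiso]; exact hne⟩
    calc localMetricDim H ≤ (⋃ i, f i '' S i).ncard := localMetricDim_le' h1
      _ ≤ ∑ i, (f i '' S i).ncard := ncard_iUnion_le' _
      _ ≤ ∑ i, localMetricDim (G i) := by
          refine Finset.sum_le_sum fun i _ => ?_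
          rw [← hScard i]
          exact Set.ncard_image_le (Set.toFinite _)
  · -- second bound: Σ |T i| + |VJ|
    by_cases hι : Nonempty ι
    · obtain ⟨i0⟩ := hι
      set JH : Set W := Set.range (fun a => f i0 (e i0 a)) with hJH
      have h2 : IsLocalMetricSet H ((⋃ i, f i '' T i) ∪ JH) := by
        intro u v huv
        obtain ⟨i, a, b, ha, hb⟩ := amal.edge_mem u v huv
        subst ha hb
        have hadj : (G i).Adj a b := (amal.f_ind i a b).1 huv
        by_cases hpar : ParallelEdge (G i) (e i) a b
        · obtain ⟨t, ht, hne⟩ := (hT i).2 a b hpar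
          exact ⟨f i t, Or.inl (Set.mem_iUnion.2 ⟨i, Set.mem_image_of_mem _ ht⟩), hne⟩
        · by_cases haJ : a ∈ Set.range (e i)
          · obtain ⟨c, hc⟩ := haJ
            refine ⟨f i a, Or.inr ⟨c, (amal.compat i0 i c).trans (by rw [hc])⟩, ?_⟩
            rw [SimpleGraph.dist_self]
            exact (huv.reachable.pos_dist_of_ne huv.ne).ne
          · by_cases hbJ : b ∈ Set.range (e i)
            · obtain ⟨c, hc⟩ := hbJ
              refine ⟨f i b, Or.inr ⟨c, (amal.compat i0 i c).trans (by rw [hc])⟩, ?_⟩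
              rw [SimpleGraph.dist_self]
              exact (huv.symm.reachable.pos_dist_of_ne huv.ne.symm).ne'
            · have hc : ∃ c, (G i).dist (e i c) a ≠ (G i).dist (e i c) b := by
                by_contra hcon
                push_neg at hcon
                exact hpar ⟨hadj, haJ, hbJ, hcon⟩
              obtain ⟨c, hc⟩ := hc
              exact ⟨f i (e i c), Or.inr ⟨c, amal.compat i0 i c⟩,
                by rw [← hiso, ← hiso]; exact hc⟩
      calc localMetricDim H ≤ ((⋃ i, f i '' T i) ∪ JH).ncard := localMetricDim_le' h2
        _ ≤ (⋃ i, f i '' T i).ncard + JH.ncard := Set.ncard_union_le _ _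
        _ ≤ (∑ i, (T i).ncard) + Fintype.card VJ := by
            refine add_le_add ?_ ?_
            · refine le_trans (ncard_iUnion_le' _) (Finset.sum_le_sum fun i _ => ?_)
              exact Set.ncard_image_le (Set.toFinite _)
            · rw [hJH, ← Set.image_univ]
              refine le_trans (Set.ncard_image_le (Set.toFinite _)) ?_
              rw [Set.ncard_univ, Nat.card_eq_fintype_card]
    · haveI : IsEmpty ι := not_nonempty_iff.1 hι
      have h0 : IsLocalMetricSet H (∅ : Set W) := by
        intro u v huv
        obtain ⟨i, -⟩ := amal.edge_mem u v huv
        exact (IsEmpty.false i).elim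
      have := localMetricDim_le' h0
      simp only [Set.ncard_empty] at this
      omega
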